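/- Let (A,B,C) be an LR triple on V of diameter d = 2. Then the tridiagonal space 𝒳 of (A,B,C) has dimension at most 6. -/

import Mathlib

/-- A decomposition of `V` of diameter `d`: a sequence of one-dimensional subspaces
`sub 0, …, sub d` whose (direct) sum is `V`; by convention `sub i = ⊥` for `i > d`
(encoding `V_{-1} = 0` and `V_{d+1} = 0`). -/
structure LRDecomp (F : Type*) [Field F] (V : Type*) [AddCommGroup V] [Module F V]
    (d : ℕ) where
  sub : ℕ → Submodule F V
  finrank_eq_one : ∀ i ≤ d, Module.finrank F (sub i) = 1
  eq_bot_of_gt : ∀ i, d < i → sub i = ⊥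
  isInternal : DirectSum.IsInternal fun i : Fin (d + 1) => sub i.val

variable {F : Type*} [Field F] {V : Type*} [AddCommGroup V] [Module F V]

/-- `A` lowers the decomposition: `A V_i = V_{i-1}` for `0 ≤ i ≤ d` (with `V_{-1} = 0`). -/
def Lowers {d : ℕ} (A : Module.End F V) (D : LRDecomp F V d) : Prop :=
  Submodule.map A (D.sub 0) = ⊥ ∧ ∀ i < d, Submodule.map A (D.sub (i + 1)) = D.sub i

/-- `B` raises the decomposition: `B V_i = V_{i+1}` for `0 ≤ i ≤ d` (with `V_{d+1} = 0`). -/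
def Raises {d : ℕ} (B : Module.End F V) (D : LRDecomp F V d) : Prop :=
  ∀ i ≤ d, Submodule.map B (D.sub i) = D.sub (i + 1)

/-- `D` is the (A,B)-decomposition: it is lowered by `A` and raised by `B`. -/
def IsLRPairWith {d : ℕ} (A B : Module.End F V) (D : LRDecomp F V d) : Prop :=
  Lowers A D ∧ Raises B D

/-- `(A,B,C)` is an LR triple of diameter `d`. -/
def IsLRTriple (d : ℕ) (A B C : Module.End F V) : Prop :=
  (∃ D : LRDecomp F V d, IsLRPairWith A B D) ∧
  (∃ D : LRDecomp F V d, IsLRPairWith B C D) ∧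
  (∃ D : LRDecomp F V d, IsLRPairWith C A D)

/-- `X` is tridiagonal with respect to the decomposition `D`:
`X V_i ⊆ V_{i-1} + V_i + V_{i+1}` (note `V_{0-1} ⊔ V_0 = V_0` makes `ℕ`-subtraction correct). -/
def IsTridiagonal {d : ℕ} (X : Module.End F V) (D : LRDecomp F V d) : Prop :=
  ∀ i, ∀ v ∈ D.sub i, X v ∈ D.sub (i - 1) ⊔ D.sub i ⊔ D.sub (i + 1)

/-- The tridiagonal space of the LR triple with decompositions `D₁, D₂, D₃`. -/
def tridiagSpace {d : ℕ} (D₁ D₂ D₃ : LRDecomp F V d) : Submodule F (Module.End F V) where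
  carrier := {X | IsTridiagonal X D₁ ∧ IsTridiagonal X D₂ ∧ IsTridiagonal X D₃}
  add_mem' := by
    rintro X Y ⟨hX1, hX2, hX3⟩ ⟨hY1, hY2, hY3⟩
    exact ⟨fun i v hv => by simpa using add_mem (hX1 i v hv) (hY1 i v hv),
           fun i v hv => by simpa using add_mem (hX2 i v hv) (hY2 i v hv),
           fun i v hv => by simpa using add_mem (hX3 i v hv) (hY3 i v hv)⟩
  zero_mem' :=
    ⟨fun i v _ => by simp,
     fun i v _ => by simp,
     fun i v _ => by simp⟩
  smul_mem' := by
    rintro c X ⟨hX1, hX2, hX3⟩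
    exact ⟨fun i v hv => by simpa using Submodule.smul_mem _ c (hX1 i v hv),
           fun i v hv => by simpa using Submodule.smul_mem _ c (hX2 i v hv),
           fun i v hv => by simpa using Submodule.smul_mem _ c (hX3 i v hv)⟩

/-- `E` is the idempotent sequence of the decomposition `D`: each `E i` acts as the
identity on `sub i` and as zero on `sub j` for `j ≠ i`. -/
def IsIdemSeq {d : ℕ} (D : LRDecomp F V d) (E : ℕ → Module.End F V) : Prop :=
  ∀ i, (∀ v ∈ D.sub i, E i v = v) ∧ ∀ j, j ≠ i → ∀ v ∈ D.sub j, E i v = 0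

/-- Bipartite: all trace data `a_i = tr(C E_i)`, `a'_i = tr(A E'_i)`, `a''_i = tr(B E''_i)`
vanish, where `E, E', E''` are the idempotent data of the triple `(A,B,C)`. -/
def IsBipartite (d : ℕ) (A B C : Module.End F V)
    (E E' E'' : ℕ → Module.End F V) : Prop :=
  ∀ i ≤ d, LinearMap.trace F V (C * E i) = 0 ∧
    LinearMap.trace F V (A * E' i) = 0 ∧ LinearMap.trace F V (B * E'' i) = 0

/-- An LR pair `(A,B)` has `q`-Weyl type. -/
def IsQWeylPair (q : F) (A B : Module.End F V) : Prop :=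
  q ≠ 0 ∧ q ^ 2 ≠ 1 ∧ q • (A * B) - q⁻¹ • (B * A) = (q - q⁻¹) • (1 : Module.End F V)

/-- An LR triple `(A,B,C)` has `q`-Weyl type. -/
def IsQWeylTriple (q : F) (A B C : Module.End F V) : Prop :=
  IsQWeylPair q A B ∧ IsQWeylPair q B C ∧ IsQWeylPair q C A

/-- `v` is an `(A,B)`-basis, relative to the `(A,B)`-decomposition `D`:
`v i ∈ sub i` is nonzero and `A v_i = v_{i-1}`. -/
def IsLRBasisFor {d : ℕ} (A : Module.End F V) (D : LRDecomp F V d) (v : ℕ → V) : Prop :=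
  (∀ i ≤ d, v i ∈ D.sub i ∧ v i ≠ 0) ∧ ∀ i, 1 ≤ i → i ≤ d → A (v i) = v (i - 1)

/-- `v` is a `(B,A)`-style basis relative to the `(A,B)`-decomposition `D` of the
reversed pair: `v i ∈ sub (d-i)` is nonzero and the lowering map sends `v i ↦ v (i-1)`.
(Used for `(C,B)`-bases relative to the `(B,C)`-decomposition, etc.) -/
def IsLRBasisRev {d : ℕ} (A : Module.End F V) (D : LRDecomp F V d) (v : ℕ → V) : Prop :=
  (∀ i ≤ d, v i ∈ D.sub (d - i) ∧ v i ≠ 0) ∧ ∀ i, 1 ≤ i → i ≤ d → A (v i) = v (i - 1)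

/-- The transition matrix from the basis `u` to the basis `w` is upper triangular
Toeplitz with parameters `α`: `w j = ∑_{i ≤ j} α_{j-i} u_i`. -/
def IsToeplitzTransition (d : ℕ) (u w : ℕ → V) (α : ℕ → F) : Prop :=
  ∀ j ≤ d, w j = ∑ i ∈ Finset.range (j + 1), α (j - i) • u i

/-- `φ` is the parameter sequence of the LR pair `(A,B)` with `(A,B)`-decomposition `D`:
`BA` acts on `V_i` as `φ i` for `1 ≤ i ≤ d`, with conventions `φ 0 = 0 = φ (d+1)`. -/
def IsParamSeq {d : ℕ} (A B : Module.End F V) (D : LRDecomp F V d) (φ : ℕ → F) : Prop :=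
  φ 0 = 0 ∧ φ (d + 1) = 0 ∧ ∀ i, 1 ≤ i → i ≤ d → ∀ v ∈ D.sub i, B (A v) = φ i • v



section AuxStmt7

variable {F : Type*} [Field F] {V : Type*} [AddCommGroup V] [Module F V]

/-- Separate a vector from a submodule by a linear functional. -/
lemma aux_exists_functional [FiniteDimensional F V] {W : Submodule F V} {v : V} (hv : v ∉ W) :
    ∃ f : V →ₗ[F] F, (∀ w ∈ W, f w = 0) ∧ f v ≠ 0 := by
  have h : W.mkQ v ≠ 0 := by
    simpa [Submodule.mkQ_apply, Submodule.Quotient.mk_eq_zero] using hv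
  obtain ⟨g, hg⟩ : ∃ g : Module.Dual F (V ⧸ W), g (W.mkQ v) ≠ 0 := by
    by_contra h'
    push_neg at h'
    exact h ((Module.forall_dual_apply_eq_zero_iff F _).1 h')
  refine ⟨g ∘ₗ W.mkQ, fun w hw => ?_, hg⟩
  have : W.mkQ w = 0 := by
    simpa [Submodule.mkQ_apply, Submodule.Quotient.mk_eq_zero] using hw
  simp [this]

lemma aux_sup_eq_top (D : LRDecomp F V 2) : D.sub 0 ⊔ D.sub 1 ⊔ D.sub 2 = ⊤ := by
  have h := D.isInternal.submodule_iSup_eq_top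
  rw [← h]
  refine le_antisymm ?_ (iSup_le fun i => ?_)
  · exact sup_le (sup_le (le_iSup_of_le 0 le_rfl) (le_iSup_of_le 1 le_rfl))
      (le_iSup_of_le 2 le_rfl)
  · fin_cases i
    · exact le_sup_of_le_left le_sup_left
    · exact le_sup_of_le_left le_sup_right
    · exact le_sup_right

lemma aux_disj (D : LRDecomp F V 2) {i j k : ℕ} (hi : i < 3) (hj : j < 3) (hk : k < 3)
    (hij : j ≠ i) (hik : k ≠ i) : Disjoint (D.sub i) (D.sub j ⊔ D.sub k) := by
  have ind := D.isInternal.submodule_iSupIndep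
  have h := ind ⟨i, hi⟩
  refine h.mono_right (sup_le ?_ ?_)
  · exact le_iSup₂_of_le (⟨j, hj⟩ : Fin 3) (by simpa [Fin.ext_iff] using hij) le_rfl
  · exact le_iSup₂_of_le (⟨k, hk⟩ : Fin 3) (by simpa [Fin.ext_iff] using hik) le_rfl

lemma aux_disj2 (D : LRDecomp F V 2) {i j : ℕ} (hi : i < 3) (hj : j < 3) (hij : j ≠ i) :
    Disjoint (D.sub i) (D.sub j) :=
  (aux_disj D hi hj hj hij hij).mono_right le_sup_left

lemma aux_finrank_sup [FiniteDimensional F V] {p q : Submodule F V} (h : Disjoint p q)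
    (hp : Module.finrank F p = 1) (hq : Module.finrank F q = 1) :
    Module.finrank F ↥(p ⊔ q) = 2 := by
  have h2 := Submodule.finrank_sup_add_finrank_inf_eq p q
  rw [disjoint_iff.1 h] at h2
  simp only [finrank_bot, add_zero] at h2
  omega

lemma aux_exists_ne_zero {W : Submodule F V} (h : Module.finrank F W = 1) :
    ∃ v ∈ W, v ≠ 0 := by
  refine Submodule.exists_mem_ne_zero_of_ne_bot ?_
  rintro rfl
  simp at h

/-- `X ↦ f (X x)` as a linear functional on `End F V`. -/
def evalFun (f : V →ₗ[F] F) (x : V) : Module.End F V →ₗ[F] F where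
  toFun X := f (X x)
  map_add' X Y := by simp
  map_smul' c X := by simp

end AuxStmt7

theorem stmt7
    {F : Type*} [Field F] {V : Type*} [AddCommGroup V] [Module F V]
    [FiniteDimensional F V] {d : ℕ} (hdim : Module.finrank F V = d + 1)
    (A B C : Module.End F V) (DAB DBC DCA : LRDecomp F V d)
    (hAB : IsLRPairWith A B DAB) (hBC : IsLRPairWith B C DBC) (hCA : IsLRPairWith C A DCA)
    (hd : d = 2) :
    Module.finrank F (tridiagSpace DAB DBC DCA) ≤ 6 := by
  subst hd
  classical
  obtain ⟨hAlow, hBraise⟩ := hAB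
  obtain ⟨hBlow, hCraise⟩ := hBC
  obtain ⟨hClow, hAraise⟩ := hCA
  -- ranges of A, B, C in two coordinate systems
  have hrA1 : LinearMap.range A = DAB.sub 0 ⊔ DAB.sub 1 := by
    have e0 : Submodule.map A (DAB.sub 0) = ⊥ := hAlow.1
    have e1 : Submodule.map A (DAB.sub 1) = DAB.sub 0 := hAlow.2 0 (by norm_num)
    have e2 : Submodule.map A (DAB.sub 2) = DAB.sub 1 := hAlow.2 1 (by norm_num)
    rw [LinearMap.range_eq_map, ← aux_sup_eq_top DAB, Submodule.map_sup, Submodule.map_sup,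
      e0, e1, e2, bot_sup_eq]
  have hrA2 : LinearMap.range A = DCA.sub 1 ⊔ DCA.sub 2 := by
    have e0 : Submodule.map A (DCA.sub 0) = DCA.sub 1 := hAraise 0 (by norm_num)
    have e1 : Submodule.map A (DCA.sub 1) = DCA.sub 2 := hAraise 1 (by norm_num)
    have e2 : Submodule.map A (DCA.sub 2) = ⊥ := by
      rw [hAraise 2 le_rfl]; exact DCA.eq_bot_of_gt 3 (by norm_num)
    rw [LinearMap.range_eq_map, ← aux_sup_eq_top DCA, Submodule.map_sup, Submodule.map_sup,
      e0, e1, e2, sup_bot_eq]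
  have hrB1 : LinearMap.range B = DAB.sub 1 ⊔ DAB.sub 2 := by
    have e0 : Submodule.map B (DAB.sub 0) = DAB.sub 1 := hBraise 0 (by norm_num)
    have e1 : Submodule.map B (DAB.sub 1) = DAB.sub 2 := hBraise 1 (by norm_num)
    have e2 : Submodule.map B (DAB.sub 2) = ⊥ := by
      rw [hBraise 2 le_rfl]; exact DAB.eq_bot_of_gt 3 (by norm_num)
    rw [LinearMap.range_eq_map, ← aux_sup_eq_top DAB, Submodule.map_sup, Submodule.map_sup,
      e0, e1, e2, sup_bot_eq]
  have hrB2 : LinearMap.range B = DBC.sub 0 ⊔ DBC.sub 1 := by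
    have e0 : Submodule.map B (DBC.sub 0) = ⊥ := hBlow.1
    have e1 : Submodule.map B (DBC.sub 1) = DBC.sub 0 := hBlow.2 0 (by norm_num)
    have e2 : Submodule.map B (DBC.sub 2) = DBC.sub 1 := hBlow.2 1 (by norm_num)
    rw [LinearMap.range_eq_map, ← aux_sup_eq_top DBC, Submodule.map_sup, Submodule.map_sup,
      e0, e1, e2, bot_sup_eq]
  have hrC1 : LinearMap.range C = DBC.sub 1 ⊔ DBC.sub 2 := by
    have e0 : Submodule.map C (DBC.sub 0) = DBC.sub 1 := hCraise 0 (by norm_num)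
    have e1 : Submodule.map C (DBC.sub 1) = DBC.sub 2 := hCraise 1 (by norm_num)
    have e2 : Submodule.map C (DBC.sub 2) = ⊥ := by
      rw [hCraise 2 le_rfl]; exact DBC.eq_bot_of_gt 3 (by norm_num)
    rw [LinearMap.range_eq_map, ← aux_sup_eq_top DBC, Submodule.map_sup, Submodule.map_sup,
      e0, e1, e2, sup_bot_eq]
  have hrC2 : LinearMap.range C = DCA.sub 0 ⊔ DCA.sub 1 := by
    have e0 : Submodule.map C (DCA.sub 0) = ⊥ := hClow.1
    have e1 : Submodule.map C (DCA.sub 1) = DCA.sub 0 := hClow.2 0 (by norm_num)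
    have e2 : Submodule.map C (DCA.sub 2) = DCA.sub 1 := hClow.2 1 (by norm_num)
    rw [LinearMap.range_eq_map, ← aux_sup_eq_top DCA, Submodule.map_sup, Submodule.map_sup,
      e0, e1, e2, bot_sup_eq]
  -- kernels of A and B are 1-dimensional
  have hkA : Module.finrank F (LinearMap.ker A) = 1 := by
    have hrn := LinearMap.finrank_range_add_finrank_ker A
    have hr2 : Module.finrank F (LinearMap.range A) = 2 := by
      rw [hrA1]
      exact aux_finrank_sup (aux_disj2 DAB (by norm_num) (by norm_num) (by norm_num))
        (DAB.finrank_eq_one 0 (by norm_num)) (DAB.finrank_eq_one 1 (by norm_num))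
    rw [hdim] at hrn
    omega
  have hkB : Module.finrank F (LinearMap.ker B) = 1 := by
    have hrn := LinearMap.finrank_range_add_finrank_ker B
    have hr2 : Module.finrank F (LinearMap.range B) = 2 := by
      rw [hrB2]
      exact aux_finrank_sup (aux_disj2 DBC (by norm_num) (by norm_num) (by norm_num))
        (DBC.finrank_eq_one 0 (by norm_num)) (DBC.finrank_eq_one 1 (by norm_num))
    rw [hdim] at hrn
    omega
  -- kernel identifications
  have hle_ker : ∀ (T : Module.End F V) (W : Submodule F V),
      Submodule.map T W = ⊥ → W ≤ LinearMap.ker T := by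
    intro T W hW v hv
    have : T v ∈ Submodule.map T W := Submodule.mem_map_of_mem hv
    rw [hW] at this
    simpa [LinearMap.mem_ker] using this
  have hAB0_keq : DAB.sub 0 = LinearMap.ker A :=
    Submodule.eq_of_le_of_finrank_le (hle_ker A _ hAlow.1)
      (le_of_eq (by rw [hkA, DAB.finrank_eq_one 0 (by norm_num)]))
  have hCA2_keq : DCA.sub 2 = LinearMap.ker A := by
    refine Submodule.eq_of_le_of_finrank_le (hle_ker A _ ?_)
      (le_of_eq (by rw [hkA, DCA.finrank_eq_one 2 (by norm_num)]))
    rw [hAraise 2 le_rfl]; exact DCA.eq_bot_of_gt 3 (by norm_num)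
  have hx_eq : DAB.sub 0 = DCA.sub 2 := hAB0_keq.trans hCA2_keq.symm
  have hAB2_keq : DAB.sub 2 = LinearMap.ker B := by
    refine Submodule.eq_of_le_of_finrank_le (hle_ker B _ ?_)
      (le_of_eq (by rw [hkB, DAB.finrank_eq_one 2 (by norm_num)]))
    rw [hBraise 2 le_rfl]; exact DAB.eq_bot_of_gt 3 (by norm_num)
  have hBC0_keq : DBC.sub 0 = LinearMap.ker B :=
    Submodule.eq_of_le_of_finrank_le (hle_ker B _ hBlow.1)
      (le_of_eq (by rw [hkB, DBC.finrank_eq_one 0 (by norm_num)]))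
  have hy_eq : DBC.sub 0 = DAB.sub 2 := hBC0_keq.trans hAB2_keq.symm
  -- pick nonzero vectors
  obtain ⟨x, hx, hx0⟩ := aux_exists_ne_zero (DAB.finrank_eq_one 0 (by norm_num))
  obtain ⟨y, hy, hy0⟩ := aux_exists_ne_zero (DBC.finrank_eq_one 0 (by norm_num))
  obtain ⟨z, hz, hz0⟩ := aux_exists_ne_zero (DCA.finrank_eq_one 0 (by norm_num))
  have hyAB2 : y ∈ DAB.sub 2 := hy_eq ▸ hy
  have hxCA2 : x ∈ DCA.sub 2 := hx_eq ▸ hx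
  -- span non-memberships
  have hxy : x ∉ (F ∙ y) := by
    intro hmem
    have hsp : (F ∙ y) ≤ DAB.sub 2 := (Submodule.span_singleton_le_iff_mem y _).2 hyAB2
    exact hx0 (Submodule.disjoint_def.1
      (aux_disj2 DAB (by norm_num) (by norm_num) (by norm_num)) x hx (hsp hmem))
  have hyx : y ∉ (F ∙ x) := by
    intro hmem
    have hsp : (F ∙ x) ≤ DAB.sub 0 := (Submodule.span_singleton_le_iff_mem x _).2 hx
    exact hy0 (Submodule.disjoint_def.1
      (aux_disj2 DAB (by norm_num) (by norm_num) (by norm_num)) y hyAB2 (hsp hmem))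
  have hzx : z ∉ (F ∙ x) := by
    intro hmem
    have hsp : (F ∙ x) ≤ DCA.sub 2 := (Submodule.span_singleton_le_iff_mem x _).2 hxCA2
    exact hz0 (Submodule.disjoint_def.1
      (aux_disj2 DCA (by norm_num) (by norm_num) (by norm_num)) z hz (hsp hmem))
  -- the three planes
  have frPA : Module.finrank F ↥(DAB.sub 0 ⊔ DAB.sub 1) = 2 :=
    aux_finrank_sup (aux_disj2 DAB (by norm_num) (by norm_num) (by norm_num))
      (DAB.finrank_eq_one 0 (by norm_num)) (DAB.finrank_eq_one 1 (by norm_num))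
  have frPB : Module.finrank F ↥(DBC.sub 0 ⊔ DBC.sub 1) = 2 :=
    aux_finrank_sup (aux_disj2 DBC (by norm_num) (by norm_num) (by norm_num))
      (DBC.finrank_eq_one 0 (by norm_num)) (DBC.finrank_eq_one 1 (by norm_num))
  have frPC : Module.finrank F ↥(DCA.sub 0 ⊔ DCA.sub 1) = 2 :=
    aux_finrank_sup (aux_disj2 DCA (by norm_num) (by norm_num) (by norm_num))
      (DCA.finrank_eq_one 0 (by norm_num)) (DCA.finrank_eq_one 1 (by norm_num))
  have hPAB : DAB.sub 0 ⊔ DAB.sub 1 ≠ DBC.sub 0 ⊔ DBC.sub 1 := by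
    intro h
    have hB' : DBC.sub 0 ⊔ DBC.sub 1 = DAB.sub 1 ⊔ DAB.sub 2 := by rw [← hrB2, hrB1]
    have hxmem : x ∈ DAB.sub 1 ⊔ DAB.sub 2 := by
      rw [← hB', ← h]; exact Submodule.mem_sup_left hx
    exact hx0 (Submodule.disjoint_def.1
      (aux_disj DAB (by norm_num) (by norm_num) (by norm_num) (by norm_num) (by norm_num))
      x hx hxmem)
  have hPBC : DBC.sub 0 ⊔ DBC.sub 1 ≠ DCA.sub 0 ⊔ DCA.sub 1 := by
    intro h
    have hC' : DCA.sub 0 ⊔ DCA.sub 1 = DBC.sub 1 ⊔ DBC.sub 2 := by rw [← hrC2, hrC1]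
    have hymem : y ∈ DBC.sub 1 ⊔ DBC.sub 2 := by
      rw [← hC', ← h]; exact Submodule.mem_sup_left hy
    exact hy0 (Submodule.disjoint_def.1
      (aux_disj DBC (by norm_num) (by norm_num) (by norm_num) (by norm_num) (by norm_num))
      y hy hymem)
  have hPAC : DAB.sub 0 ⊔ DAB.sub 1 ≠ DCA.sub 0 ⊔ DCA.sub 1 := by
    intro h
    have hA' : DAB.sub 0 ⊔ DAB.sub 1 = DCA.sub 1 ⊔ DCA.sub 2 := by rw [← hrA1, hrA2]
    have hzmem : z ∈ DCA.sub 1 ⊔ DCA.sub 2 := by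
      rw [← hA', h]; exact Submodule.mem_sup_left hz
    exact hz0 (Submodule.disjoint_def.1
      (aux_disj DCA (by norm_num) (by norm_num) (by norm_num) (by norm_num) (by norm_num))
      z hz hzmem)
  -- pick vectors separating the planes
  have hv1 : ∃ v ∈ DCA.sub 0 ⊔ DCA.sub 1, v ∉ DAB.sub 0 ⊔ DAB.sub 1 := by
    by_contra h
    push_neg at h
    exact hPAC (Submodule.eq_of_le_of_finrank_le (fun v hv => h v hv)
      (le_of_eq (by rw [frPA, frPC]))).symm
  have hv2 : ∃ v ∈ DCA.sub 0 ⊔ DCA.sub 1, v ∉ DBC.sub 0 ⊔ DBC.sub 1 := by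
    by_contra h
    push_neg at h
    exact hPBC (Submodule.eq_of_le_of_finrank_le (fun v hv => h v hv)
      (le_of_eq (by rw [frPB, frPC]))).symm
  have hv3 : ∃ v ∈ DBC.sub 0 ⊔ DBC.sub 1, v ∉ DCA.sub 0 ⊔ DCA.sub 1 := by
    by_contra h
    push_neg at h
    exact hPBC (Submodule.eq_of_le_of_finrank_le (fun v hv => h v hv)
      (le_of_eq (by rw [frPC, frPB])))
  obtain ⟨v₁, hv₁C, hv₁A⟩ := hv1
  obtain ⟨v₂, hv₂C, hv₂B⟩ := hv2
  obtain ⟨v₃, hv₃B, hv₃C⟩ := hv3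
  -- functionals
  obtain ⟨f₁, hf₁0, hf₁⟩ := aux_exists_functional hv₁A
  obtain ⟨f₂, hf₂0, hf₂⟩ := aux_exists_functional hv₂B
  obtain ⟨f₃, hf₃0, hf₃⟩ := aux_exists_functional hv₃C
  obtain ⟨φ₁, hφ₁0, hφ₁x⟩ := aux_exists_functional hxy
  obtain ⟨φ₂, hφ₂0, hφ₂y⟩ := aux_exists_functional hyx
  obtain ⟨φ₃, hφ₃0, hφ₃z⟩ := aux_exists_functional hzx
  have hφ₁y : φ₁ y = 0 := hφ₁0 y (Submodule.mem_span_singleton_self y)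
  have hφ₂x : φ₂ x = 0 := hφ₂0 x (Submodule.mem_span_singleton_self x)
  have hφ₃x : φ₃ x = 0 := hφ₃0 x (Submodule.mem_span_singleton_self x)
  have hf₃v₁ : f₃ v₁ = 0 := hf₃0 v₁ hv₁C
  have hf₃v₂ : f₃ v₂ = 0 := hf₃0 v₂ hv₂C
  have hf₂v₃ : f₂ v₃ = 0 := hf₂0 v₃ hv₃B
  -- the linear map Φ
  set Φ : Module.End F V →ₗ[F] (Fin 3 → F) :=
    LinearMap.pi ![evalFun f₁ x, evalFun f₂ y, evalFun f₃ z] with hΦdef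
  have hΦ_surj : Function.Surjective Φ := by
    intro w
    refine ⟨(w 0 * (φ₁ x * f₁ v₁)⁻¹) • φ₁.smulRight v₁
      + (w 1 * (φ₂ y * f₂ v₂)⁻¹) • φ₂.smulRight v₂
      + (w 2 * (φ₃ z * f₃ v₃)⁻¹) • φ₃.smulRight v₃, ?_⟩
    funext i
    fin_cases i <;>
      simp [hΦdef, evalFun, LinearMap.pi_apply, LinearMap.smulRight_apply,
        hφ₁y, hφ₂x, hφ₃x, hf₃v₁, hf₃v₂, hf₂v₃, smul_eq_mul, mul_comm, mul_assoc, mul_left_comm] <;>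
      field_simp
  -- dimension of the kernel of Φ
  have hEnd9 : Module.finrank F (Module.End F V) = 9 := by
    have : Module.finrank F (V →ₗ[F] V) = 9 := by
      rw [Module.finrank_linearMap, hdim]
    exact this
  have hkerΦ : Module.finrank F (LinearMap.ker Φ) = 6 := by
    have h1 := LinearMap.finrank_range_add_finrank_ker Φ
    rw [LinearMap.range_eq_top.2 hΦ_surj, finrank_top, hEnd9] at h1
    have h3 : Module.finrank F (Fin 3 → F) = 3 := by
      simp [Module.finrank_pi]
    rw [h3] at h1
    omega
  -- tridiagonal space is contained in ker Φ
  have hsub : tridiagSpace DAB DBC DCA ≤ LinearMap.ker Φ := by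
    rintro X ⟨h1, h2, h3⟩
    have hx' : X x ∈ DAB.sub 0 ⊔ DAB.sub 1 := by
      have := h1 0 x hx
      simpa using this
    have hy' : X y ∈ DBC.sub 0 ⊔ DBC.sub 1 := by
      have := h2 0 y hy
      simpa using this
    have hz' : X z ∈ DCA.sub 0 ⊔ DCA.sub 1 := by
      have := h3 0 z hz
      simpa using this
    rw [LinearMap.mem_ker]
    funext i
    fin_cases i <;>
      simp [hΦdef, evalFun, LinearMap.pi_apply, hf₁0 _ hx', hf₂0 _ hy', hf₃0 _ hz']
  calc Module.finrank F (tridiagSpace DAB DBC DCA)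
      ≤ Module.finrank F (LinearMap.ker Φ) := Submodule.finrank_mono hsub
    _ = 6 := hkerΦ
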